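/- Suppose A is pointed, i.e., there exists c₀ ∈ ℝ^d with ⟨c₀, a_j⟩ > 0 for all j = 1,…,n. Then for every w ∈ ℝ^n one has pos(A) = ⋃_{τ ∈ T_w} pos(τ); that is, every element of the cone pos(A) is a nonnegative real combination of the columns a_j with j ∈ τ, for some subset τ ∈ T_w. -/

import Mathlib

open Finset

section Cone
variable {ι : Type*} [Fintype ι] {E : Type*} [NormedAddCommGroup E] [NormedSpace ℝ E]

/-- The cone generated by the vectors `v j`. -/
def coneOf (v : ι → E) : Set E :=
  {x | ∃ μ : ι → ℝ, (∀ j, 0 ≤ μ j) ∧ x = ∑ j, μ j • v j}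

lemma carath_aux (v : ι → E) :
    ∀ (N : ℕ) (s : Finset ι) (μ : ι → ℝ), s.card ≤ N → (∀ j ∈ s, 0 ≤ μ j) →
    ∃ (t : Finset ι) (ν : ι → ℝ), (∀ j ∈ t, 0 ≤ ν j) ∧
      (∑ j ∈ t, ν j • v j = ∑ j ∈ s, μ j • v j) ∧
      LinearIndependent ℝ (fun j : t => v (j : ι)) := by
  classical
  intro N
  induction N with
  | zero =>
    intro s μ hcard _
    have hs : s = ∅ := Finset.card_eq_zero.mp (Nat.le_zero.mp hcard)
    subst hs
    refine ⟨∅, 0, by simp, by simp, ?_⟩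
    have : IsEmpty ((∅ : Finset ι) : Type _) := by
      simp [Finset.isEmpty_coe_sort]
      exact ⟨fun x => x.2⟩
    exact linearIndependent_empty_type
  | succ N ih =>
    intro s μ hcard hμ
    by_cases hind : LinearIndependent ℝ (fun j : s => v (j : ι))
    · exact ⟨s, μ, hμ, rfl, hind⟩
    · rw [Fintype.not_linearIndependent_iff] at hind
      obtain ⟨g, hgsum, i₀, hi₀⟩ := hind
      -- extend g to ι, possibly flipped so that some coefficient is positive
      have hex : ∃ c : ι → ℝ, (∑ j ∈ s, c j • v j = 0) ∧ (∃ j ∈ s, 0 < c j) := by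
        set ε : ℝ := if 0 < g i₀ then 1 else -1 with hε
        refine ⟨fun j => if h : j ∈ s then ε * g ⟨j, h⟩ else 0, ?_, ⟨i₀, i₀.2, ?_⟩⟩
        · rw [← Finset.sum_attach s (fun j => (if h : j ∈ s then ε * g ⟨j, h⟩ else 0) • v j)]
          have h1 : ∀ j : s, (if h : (j : ι) ∈ s then ε * g ⟨(j : ι), h⟩ else 0) • v (j : ι)
              = ε • (g j • v (j : ι)) := by
            intro j
            rw [dif_pos j.2, mul_smul]
          rw [Finset.sum_congr rfl (fun j _ => h1 j), ← Finset.smul_sum,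
            ← Finset.univ_eq_attach, hgsum, smul_zero]
        · show (0:ℝ) < (if h : (i₀ : ι) ∈ s then ε * g ⟨(i₀ : ι), h⟩ else 0)
          rw [dif_pos i₀.2]
          show (0:ℝ) < ε * g i₀
          rw [hε]
          rcases lt_trichotomy (g i₀) 0 with h | h | h
          · rw [if_neg (by linarith)]; linarith
          · exact absurd h hi₀
          · rw [if_pos h]; linarith
      obtain ⟨c, hcsum, j₁, hj₁s, hj₁pos⟩ := hex
      -- the set of positive coefficients
      set T := s.filter (fun j => 0 < c j) with hT
      have hTne : T.Nonempty := ⟨j₁, Finset.mem_filter.mpr ⟨hj₁s, hj₁pos⟩⟩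
      set t₀ := T.inf' hTne (fun j => μ j / c j) with ht₀
      obtain ⟨jm, hjmT, hjm⟩ := Finset.exists_mem_eq_inf' hTne (fun j => μ j / c j)
      have hjms : jm ∈ s := (Finset.mem_filter.mp hjmT).1
      have hjmc : 0 < c jm := (Finset.mem_filter.mp hjmT).2
      have ht₀0 : 0 ≤ t₀ := by
        apply Finset.le_inf'
        intro b hb
        exact div_nonneg (hμ b (Finset.mem_filter.mp hb).1) (le_of_lt (Finset.mem_filter.mp hb).2)
      set ν : ι → ℝ := fun j => μ j - t₀ * c j with hν
      have hν0 : ∀ j ∈ s, 0 ≤ ν j := by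
        intro j hj
        rcases le_or_gt (c j) 0 with h | h
        · have : t₀ * c j ≤ 0 := mul_nonpos_of_nonneg_of_nonpos ht₀0 h
          have := hμ j hj
          show 0 ≤ μ j - t₀ * c j
          linarith
        · have hjT : j ∈ T := Finset.mem_filter.mpr ⟨hj, h⟩
          have : t₀ ≤ μ j / c j := Finset.inf'_le _ hjT
          have : t₀ * c j ≤ μ j := by
            rw [← le_div_iff₀ h]; exact this
          show 0 ≤ μ j - t₀ * c j
          linarith
      have hνjm : ν jm = 0 := by
        show μ jm - t₀ * c jm = 0
        rw [ht₀, hjm]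
        field_simp
        ring
      have hsumν : ∑ j ∈ s, ν j • v j = ∑ j ∈ s, μ j • v j := by
        simp only [hν, sub_smul, Finset.sum_sub_distrib]
        have : ∑ j ∈ s, (t₀ * c j) • v j = t₀ • ∑ j ∈ s, c j • v j := by
          rw [Finset.smul_sum]
          exact Finset.sum_congr rfl fun j _ => by rw [mul_smul]
        rw [this, hcsum, smul_zero, sub_zero]
      have hcard2 : (s.erase jm).card ≤ N := by
        have := Finset.card_erase_of_mem hjms
        omega
      have hsum_erase : ∑ j ∈ s.erase jm, ν j • v j = ∑ j ∈ s, ν j • v j :=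
        Finset.sum_erase s (by rw [hνjm, zero_smul])
      obtain ⟨t, ν', h1, h2, h3⟩ := ih (s.erase jm) ν hcard2
        (fun j hj => hν0 j (Finset.mem_of_mem_erase hj))
      exact ⟨t, ν', h1, by rw [h2, hsum_erase, hsumν], h3⟩

lemma coneOf_convex (v : ι → E) : Convex ℝ (coneOf v) := by
  rintro x ⟨μ, hμ, rfl⟩ y ⟨η, hη, rfl⟩ p q hp hq _
  refine ⟨fun j => p * μ j + q * η j,
    fun j => add_nonneg (mul_nonneg hp (hμ j)) (mul_nonneg hq (hη j)), ?_⟩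
  rw [Finset.smul_sum, Finset.smul_sum, ← Finset.sum_add_distrib]
  exact Finset.sum_congr rfl fun j _ => by
    rw [add_smul, mul_smul, mul_smul]

lemma coneOf_smul_mem (v : ι → E) {x : E} (hx : x ∈ coneOf v) {t : ℝ} (ht : 0 ≤ t) :
    t • x ∈ coneOf v := by
  obtain ⟨μ, hμ, rfl⟩ := hx
  refine ⟨fun j => t * μ j, fun j => mul_nonneg ht (hμ j), ?_⟩
  rw [Finset.smul_sum]
  exact Finset.sum_congr rfl fun j _ => by rw [mul_smul]

lemma coneOf_zero_mem (v : ι → E) : (0 : E) ∈ coneOf v :=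
  ⟨0, fun j => le_refl _, by simp⟩

lemma coneOf_mem (v : ι → E) (j : ι) : v j ∈ coneOf v := by
  classical
  refine ⟨fun k => if k = j then 1 else 0, fun k => ?_, ?_⟩
  · show (0:ℝ) ≤ if k = j then 1 else 0
    split <;> norm_num
  have : ∀ k, (if k = j then (1:ℝ) else 0) • v k = if k = j then v k else 0 := by
    intro k; split <;> simp
  rw [Finset.sum_congr rfl fun k _ => this k, Finset.sum_ite_eq' Finset.univ j v,
    if_pos (Finset.mem_univ j)]

lemma coneOf_isClosed [FiniteDimensional ℝ E] (v : ι → E) : IsClosed (coneOf v) := by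
  classical
  have hrepr : coneOf v = ⋃ (s : Finset ι) (_ : LinearIndependent ℝ (fun j : s => v (j : ι))),
      (fun μ : {x // x ∈ s} → ℝ => ∑ j, μ j • v (j : ι)) '' {μ | ∀ j, 0 ≤ μ j} := by
    ext x
    constructor
    · rintro ⟨μ, hμ, rfl⟩
      obtain ⟨t, ν, hν0, hsum, hind⟩ := carath_aux v (Finset.univ.card) Finset.univ μ le_rfl
        (fun j _ => hμ j)
      refine Set.mem_iUnion.mpr ⟨t, Set.mem_iUnion.mpr ⟨hind,
        ⟨fun j => ν (j : ι), fun j => hν0 j j.2, ?_⟩⟩⟩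
      show (∑ j ∈ t.attach, ν (j : ι) • v (j : ι)) = ∑ j : ι, μ j • v j
      rw [Finset.sum_attach t (fun j => ν j • v j), hsum]
    · intro hx
      obtain ⟨s, hs⟩ := Set.mem_iUnion.mp hx
      obtain ⟨hind, μ, hμ, rfl⟩ := Set.mem_iUnion.mp hs
      refine ⟨fun j => if h : j ∈ s then μ ⟨j, h⟩ else 0,
        fun j => ?_, ?_⟩
      · show 0 ≤ (if h : j ∈ s then μ ⟨j, h⟩ else 0)
        split
        · exact hμ _
        · exact le_refl _
      rw [← Finset.sum_subset (Finset.subset_univ s)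
        (fun j _ hj => by
          show (if h : j ∈ s then μ ⟨j, h⟩ else 0) • v j = 0
          rw [dif_neg hj, zero_smul])]
      rw [← Finset.sum_attach s (fun j => (if h : j ∈ s then μ ⟨j, h⟩ else 0) • v j)]
      rw [Finset.univ_eq_attach]
      refine (Finset.sum_congr rfl fun j _ => ?_).symm
      show (if h : (j : ι) ∈ s then μ ⟨(j : ι), h⟩ else 0) • v (j : ι) = μ j • v (j : ι)
      rw [dif_pos j.2]
  rw [hrepr]
  refine isClosed_iUnion_of_finite fun s => isClosed_iUnion_of_finite fun hs => ?_
  let L : ({x // x ∈ s} → ℝ) →ₗ[ℝ] E :=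
    { toFun := fun μ => ∑ j, μ j • v (j : ι),
      map_add' := by intro a b; simp [add_smul, Finset.sum_add_distrib],
      map_smul' := by intro c a; simp [Finset.smul_sum, mul_smul] }
  have hker : LinearMap.ker L = ⊥ :=
    LinearMap.ker_eq_bot'.mpr fun m hm =>
      funext fun j => Fintype.linearIndependent_iff.mp hs m hm j
  have hemb := LinearMap.isClosedEmbedding_of_injective hker
  have horth : IsClosed {μ : {x // x ∈ s} → ℝ | ∀ j, 0 ≤ μ j} := by
    have : {μ : {x // x ∈ s} → ℝ | ∀ j, 0 ≤ μ j} = ⋂ j, (fun μ : {x // x ∈ s} → ℝ => μ j) ⁻¹' Set.Ici 0 := by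
      ext y; simp [Set.mem_iInter]
    rw [this]
    exact isClosed_iInter fun j => IsClosed.preimage (continuous_apply j) isClosed_Ici
  exact hemb.isClosedMap _ horth

/-- Farkas' lemma. -/
lemma coneOf_farkas [FiniteDimensional ℝ E] (v : ι → E) {b : E} (hb : b ∉ coneOf v) :
    ∃ f : E →L[ℝ] ℝ, (∀ j, f (v j) ≤ 0) ∧ 0 < f b := by
  obtain ⟨f, u, hfs, hub⟩ :=
    geometric_hahn_banach_closed_point (coneOf_convex v) (coneOf_isClosed v) hb
  have hu0 : 0 < u := by
    have := hfs 0 (coneOf_zero_mem v)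
    simpa using this
  refine ⟨f, fun j => ?_, ?_⟩
  · by_contra h
    push_neg at h
    have hmem := coneOf_smul_mem v (coneOf_mem v j) (le_of_lt (div_pos hu0 h))
    have := hfs _ hmem
    rw [map_smul, smul_eq_mul, div_mul_cancel₀ _ (ne_of_gt h)] at this
    exact lt_irrefl u this
  · linarith

end Cone

section Pair
variable {k : ℕ}

lemma sum_pair {ι : Type*} [Fintype ι] (μ : ι → ℝ) (y : ι → (Fin k → ℝ)) (t : ι → ℝ) :
    (∑ j, μ j • ((y j, t j) : (Fin k → ℝ) × ℝ)) =
      ((fun i => ∑ j, μ j * y j i), ∑ j, μ j * t j) := by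
  apply Prod.ext
  · rw [Prod.fst_sum]
    funext i
    rw [Finset.sum_apply]
    simp [smul_eq_mul]
  · rw [Prod.snd_sum]
    simp [smul_eq_mul]

lemma f_pair (f : ((Fin k → ℝ) × ℝ) →L[ℝ] ℝ) (y : Fin k → ℝ) (t : ℝ) :
    f (y, t) = (∑ i, y i * f (Pi.single i 1, 0)) + t * f (0, 1) := by
  have hdecomp : ((y, t) : (Fin k → ℝ) × ℝ) =
      (∑ i, y i • ((Pi.single i 1 : Fin k → ℝ), (0:ℝ))) + t • ((0:Fin k → ℝ), (1:ℝ)) := by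
    apply Prod.ext
    · rw [Prod.fst_add, Prod.fst_sum]
      simp only [Prod.smul_fst, Prod.smul_snd, smul_eq_mul, mul_zero, mul_one, smul_zero]
      funext j
      rw [Pi.add_apply, Finset.sum_apply]
      simp [Pi.single_apply, Finset.sum_ite_eq]
    · rw [Prod.snd_add, Prod.snd_sum]
      simp
  rw [hdecomp, map_add, map_sum, map_smul, smul_eq_mul]
  congr 1
  exact Finset.sum_congr rfl fun i _ => by rw [map_smul, smul_eq_mul]

lemma swap_sum {d n : ℕ} (c : Fin d → ℝ) (η : Fin n → ℝ) (M : Fin d → Fin n → ℝ) :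
    ∑ j, η j * (∑ i, c i * M i j) = ∑ i, c i * (∑ j, η j * M i j) := by
  simp_rw [Finset.mul_sum]
  rw [Finset.sum_comm]
  exact Finset.sum_congr rfl fun i _ => Finset.sum_congr rfl fun j _ => by ring

end Pair
open Matrix

/-- `τ ∈ T_w`. -/
def memTw {d n : ℕ} (A : Matrix (Fin d) (Fin n) ℤ) (w : Fin n → ℝ)
    (τ : Finset (Fin n)) : Prop :=
  ∃ c : Fin d → ℝ, (∀ j ∈ τ, (∑ i, c i * (A i j : ℝ)) = w j) ∧
    ∀ j ∉ τ, (∑ i, c i * (A i j : ℝ)) < w j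

/-- The cone of nonnegative real combinations of the columns `a_j`, `j ∈ τ`. -/
def posCone {d n : ℕ} (A : Matrix (Fin d) (Fin n) ℤ) (τ : Finset (Fin n)) :
    Set (Fin d → ℝ) :=
  {x | ∃ lam : Fin n → ℝ, (∀ j, 0 ≤ lam j) ∧ x = fun i => ∑ j ∈ τ, lam j * (A i j : ℝ)}

theorem stmt_3 {d n : ℕ} (A : Matrix (Fin d) (Fin n) ℤ)
    (hrank : (A.map (Int.cast : ℤ → ℝ)).rank = d)
    (hpointed : ∃ c₀ : Fin d → ℝ, ∀ j, 0 < ∑ i, c₀ i * (A i j : ℝ))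
    (w : Fin n → ℝ) :
    posCone A Finset.univ = ⋃ τ ∈ {τ : Finset (Fin n) | memTw A w τ}, posCone A τ := by
  classical
  obtain ⟨c₀, hc₀⟩ := hpointed
  ext x
  simp only [Set.mem_iUnion, Set.mem_setOf_eq]
  constructor
  · rintro ⟨lam, hlam, hx⟩
    rcases Nat.eq_zero_or_pos n with hn | hn
    · subst hn
      exact ⟨Finset.univ, ⟨0, fun j _ => j.elim0, fun j _ => j.elim0⟩, lam, hlam, hx⟩
    have hne : (Finset.univ : Finset (Fin n)).Nonempty := ⟨⟨0, hn⟩, Finset.mem_univ _⟩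
    set a : Fin n → (Fin d → ℝ) := fun j i => (A i j : ℝ) with ha
    set v : Fin n → (Fin d → ℝ) × ℝ := fun j => (a j, w j) with hv
    set S : Set ℝ := {t | ((x, t) : (Fin d → ℝ) × ℝ) ∈ coneOf v} with hS
    have memS : ∀ t : ℝ, t ∈ S ↔ ∃ μ : Fin n → ℝ, (∀ j, 0 ≤ μ j) ∧
        (x = fun i => ∑ j, μ j * (A i j : ℝ)) ∧ t = ∑ j, μ j * w j := by
      intro t
      constructor
      · rintro ⟨μ, hμ, heq⟩
        rw [show (∑ j, μ j • v j) = ∑ j, μ j • ((a j, w j) : (Fin d → ℝ) × ℝ) from rfl,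
          sum_pair μ a w, Prod.ext_iff] at heq
        exact ⟨μ, hμ, heq.1, heq.2⟩
      · rintro ⟨μ, hμ, h1, h2⟩
        refine ⟨μ, hμ, ?_⟩
        rw [show (∑ j, μ j • v j) = ∑ j, μ j • ((a j, w j) : (Fin d → ℝ) × ℝ) from rfl,
          sum_pair μ a w, Prod.ext_iff]
        exact ⟨h1, h2⟩
    have hSne : S.Nonempty := ⟨∑ j, lam j * w j, (memS _).mpr ⟨lam, hlam, hx, rfl⟩⟩
    set m := Finset.univ.inf' hne (fun j => ∑ i, c₀ i * (A i j : ℝ)) with hm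
    have hm0 : 0 < m := (Finset.lt_inf'_iff hne).mpr (fun j _ => hc₀ j)
    set W := Finset.univ.sup' hne (fun j => |w j|) with hW
    have hW0 : 0 ≤ W :=
      le_trans (abs_nonneg (w ⟨0, hn⟩))
        (Finset.le_sup' (fun j => |w j|) (Finset.mem_univ ⟨0, hn⟩))
    have hWj : ∀ j, -W ≤ w j := fun j =>
      le_trans (neg_le_neg (Finset.le_sup' (fun j => |w j|) (Finset.mem_univ j)))
        (neg_abs_le (w j))
    set B := (∑ i, c₀ i * x i) / m with hB
    have hmass : ∀ μ : Fin n → ℝ, (∀ j, 0 ≤ μ j) →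
        (x = fun i => ∑ j, μ j * (A i j : ℝ)) → ∑ j, μ j ≤ B := by
      intro μ hμ h1
      have key : ∑ i, c₀ i * x i = ∑ j, μ j * (∑ i, c₀ i * (A i j : ℝ)) := by
        simp only [h1]
        exact (swap_sum c₀ μ (fun i j => (A i j : ℝ))).symm
      have h2 : m * (∑ j, μ j) ≤ ∑ i, c₀ i * x i := by
        rw [key, Finset.mul_sum]
        refine Finset.sum_le_sum fun j _ => ?_
        have hpj : m ≤ ∑ i, c₀ i * (A i j : ℝ) :=
          Finset.inf'_le _ (Finset.mem_univ j)
        nlinarith [hμ j]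
      rw [hB, le_div_iff₀ hm0]
      nlinarith
    have hSbdd : BddBelow S := by
      refine ⟨-(W * B), fun t ht => ?_⟩
      obtain ⟨μ, hμ, h1, h2⟩ := (memS t).mp ht
      have hμB := hmass μ hμ h1
      have hW1 : W * (∑ j, μ j) ≤ W * B := mul_le_mul_of_nonneg_left hμB hW0
      have h3 : ∑ j, μ j * (-W) ≤ ∑ j, μ j * w j :=
        Finset.sum_le_sum fun j _ => mul_le_mul_of_nonneg_left (hWj j) (hμ j)
      have h4 : ∑ j, μ j * (-W) = -(W * ∑ j, μ j) := by
        rw [← Finset.sum_mul]; ring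
      rw [h2]
      linarith
    have hSclosed : IsClosed S := by
      have h : S = (fun t : ℝ => ((x, t) : (Fin d → ℝ) × ℝ)) ⁻¹' (coneOf v) := rfl
      rw [h]
      exact (coneOf_isClosed v).preimage (Continuous.prodMk_right x)
    set tst := sInf S with htst
    have htS : tst ∈ S := hSclosed.csInf_mem hSne hSbdd
    obtain ⟨η, hη, hxa, htw⟩ := (memS tst).mp htS
    set g : (Fin n ⊕ Fin 2) → (Fin d → ℝ) × ℝ :=
      Sum.elim v ![(-x, -tst), (0, 1)] with hg
    have hbg : ((0 : Fin d → ℝ), (-1 : ℝ)) ∉ coneOf g := by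
      rintro ⟨μ, hμ0, hbeq⟩
      set μ' : Fin n → ℝ := fun j => μ (Sum.inl j) with hμ'
      set ρ := μ (Sum.inr 0) with hρdef
      set ν := μ (Sum.inr 1) with hνdef
      have hsplit : (∑ k, μ k • g k) =
          ((fun i => (∑ j, μ' j * (A i j : ℝ)) + (ρ * (-x i) + ν * 0)),
            (∑ j, μ' j * w j) + (ρ * (-tst) + ν * 1)) := by
        rw [Fintype.sum_sum_type, Fin.sum_univ_two]
        have hl : (∑ j : Fin n, μ (Sum.inl j) • g (Sum.inl j)) =
            ((fun i => ∑ j, μ' j * (A i j : ℝ)), ∑ j, μ' j * w j) := by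
          rw [show (∑ j : Fin n, μ (Sum.inl j) • g (Sum.inl j))
            = ∑ j, μ' j • ((a j, w j) : (Fin d → ℝ) × ℝ) from rfl, sum_pair μ' a w]
        have hr : (μ (Sum.inr 0) • g (Sum.inr 0) + μ (Sum.inr 1) • g (Sum.inr 1)
            : (Fin d → ℝ) × ℝ)
            = ((fun i => ρ * (-x i) + ν * 0), ρ * (-tst) + ν * 1) := by
          have e0 : g (Sum.inr 0) = ((-x, -tst) : (Fin d → ℝ) × ℝ) := rfl
          have e1 : g (Sum.inr 1) = ((0, 1) : (Fin d → ℝ) × ℝ) := rfl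
          rw [e0, e1]
          apply Prod.ext
          · funext i
            show ρ * (-x) i + ν * (0 : Fin d → ℝ) i = ρ * (-x i) + ν * 0
            simp
          · show ρ * (-tst) + ν * 1 = ρ * (-tst) + ν * 1
            rfl
        rw [hl, hr, Prod.mk_add_mk]
        exact Prod.ext (funext fun i => rfl) rfl
      rw [hsplit, Prod.ext_iff] at hbeq
      have hfst : ∀ i, (0:ℝ) = (∑ j, μ' j * (A i j : ℝ)) + (ρ * (-x i) + ν * 0) :=
        fun i => congrFun hbeq.1 i
      have hsnd : (-1:ℝ) = (∑ j, μ' j * w j) + (ρ * (-tst) + ν * 1) := hbeq.2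
      have hρ0 : 0 ≤ ρ := hμ0 (Sum.inr 0)
      have hν0 : 0 ≤ ν := hμ0 (Sum.inr 1)
      rcases eq_or_lt_of_le hρ0 with hρ | hρ
      · have hfst' : ∀ i, ∑ j, μ' j * (A i j : ℝ) = 0 := by
          intro i
          have h := hfst i
          rw [← hρ] at h
          linarith
        have hsnd' : ∑ j, μ' j * w j = -1 - ν := by
          have h := hsnd
          rw [← hρ] at h
          linarith
        have hmem : (tst + ∑ j, μ' j * w j) ∈ S := by
          refine (memS _).mpr ⟨fun j => η j + μ' j,
            fun j => add_nonneg (hη j) (hμ0 (Sum.inl j)), ?_, ?_⟩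
          · funext i
            rw [Finset.sum_congr rfl (fun j _ => add_mul (η j) (μ' j) ((A i j : ℝ))),
              Finset.sum_add_distrib, hfst' i, add_zero]
            exact congrFun hxa i
          · rw [Finset.sum_congr rfl (fun j _ => add_mul (η j) (μ' j) (w j)),
              Finset.sum_add_distrib, ← htw]
        have hle : tst ≤ tst + ∑ j, μ' j * w j := csInf_le hSbdd hmem
        linarith
      · have hxρ : ∀ i, ∑ j, μ' j * (A i j : ℝ) = ρ * x i := fun i => by linarith [hfst i]
        have hx' : ∀ i, ∑ j, (μ' j / ρ) * (A i j : ℝ) = x i := by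
          intro i
          rw [Finset.sum_congr rfl
            (fun j _ => div_mul_eq_mul_div (μ' j) ρ ((A i j : ℝ))), ← Finset.sum_div, hxρ i]
          field_simp
        have hmem : (∑ j, (μ' j / ρ) * w j) ∈ S :=
          (memS _).mpr ⟨fun j => μ' j / ρ,
            fun j => div_nonneg (hμ0 (Sum.inl j)) (le_of_lt hρ),
            by funext i; exact (hx' i).symm, rfl⟩
        have hle : tst ≤ ∑ j, (μ' j / ρ) * w j := csInf_le hSbdd hmem
        have hval : ∑ j, (μ' j / ρ) * w j = (∑ j, μ' j * w j) / ρ := by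
          rw [Finset.sum_div]
          exact Finset.sum_congr rfl fun j _ => div_mul_eq_mul_div _ _ _
        have hsnd' : ∑ j, μ' j * w j = ρ * tst - 1 - ν := by linarith
        rw [hval, hsnd'] at hle
        have hlt : (ρ * tst - 1 - ν) / ρ < tst := by
          rw [div_lt_iff₀ hρ]
          nlinarith
        linarith
    obtain ⟨f, hfle, hfb⟩ := coneOf_farkas g hbg
    set σ := f ((0 : Fin d → ℝ), (-1 : ℝ)) with hσ
    have hσ0 : 0 < σ := hfb
    have hf01 : f ((0 : Fin d → ℝ), (1 : ℝ)) = -σ := by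
      rw [hσ, show ((0 : Fin d → ℝ), (-1 : ℝ)) = -(((0 : Fin d → ℝ), (1 : ℝ)))
        from by simp [Prod.ext_iff], map_neg, neg_neg]
    set c : Fin d → ℝ := fun i => f (Pi.single i 1, 0) / σ with hc
    have hkey : ∀ y : Fin d → ℝ, ∑ i, c i * y i = f (y, 0) / σ := by
      intro y
      have h1 : ∑ i, c i * y i = (∑ i, y i * f (Pi.single i 1, 0)) / σ := by
        rw [Finset.sum_div]
        refine Finset.sum_congr rfl fun i _ => ?_
        show (f (Pi.single i 1, 0) / σ) * y i = y i * f (Pi.single i 1, 0) / σ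
        ring
      rw [h1, f_pair f y 0, zero_mul, add_zero]
    have hfeas : ∀ j, ∑ i, c i * (A i j : ℝ) ≤ w j := by
      intro j
      have h := hfle (Sum.inl j)
      rw [show g (Sum.inl j) = ((a j, w j) : (Fin d → ℝ) × ℝ) from rfl,
        f_pair f (a j) (w j), hf01] at h
      have h2 : f (a j, 0) = ∑ i, a j i * f (Pi.single i 1, 0) := by
        rw [f_pair f (a j) 0, zero_mul, add_zero]
      have h3 : ∑ i, c i * (A i j : ℝ) = f (a j, 0) / σ := hkey (a j)
      rw [h3, div_le_iff₀ hσ0]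
      nlinarith
    have hcx : tst ≤ ∑ i, c i * x i := by
      have h := hfle (Sum.inr 0)
      rw [show g (Sum.inr 0) = ((-x, -tst) : (Fin d → ℝ) × ℝ) from rfl,
        show ((-x, -tst) : (Fin d → ℝ) × ℝ) = -((x, tst)) from by simp [Prod.ext_iff],
        map_neg] at h
      have h' : 0 ≤ f (x, tst) := by linarith
      rw [f_pair f x tst, hf01] at h'
      have h2 : f (x, 0) = ∑ i, x i * f (Pi.single i 1, 0) := by
        rw [f_pair f x 0, zero_mul, add_zero]
      rw [hkey x, le_div_iff₀ hσ0]
      nlinarith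
    have hslack : ∀ j, η j * (w j - ∑ i, c i * (A i j : ℝ)) = 0 := by
      have hsum0 : ∑ j, η j * (w j - ∑ i, c i * (A i j : ℝ)) = tst - ∑ i, c i * x i := by
        rw [Finset.sum_congr rfl (fun j _ => mul_sub (η j) (w j) _),
          Finset.sum_sub_distrib, ← htw, swap_sum c η (fun i j => (A i j : ℝ))]
        congr 1
        refine Finset.sum_congr rfl fun i _ => ?_
        rw [show x i = ∑ j, η j * (A i j : ℝ) from congrFun hxa i]
      have hnn : ∀ j ∈ Finset.univ, (0:ℝ) ≤ η j * (w j - ∑ i, c i * (A i j : ℝ)) :=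
        fun j _ => mul_nonneg (hη j) (by linarith [hfeas j])
      have hle0 : ∑ j, η j * (w j - ∑ i, c i * (A i j : ℝ)) ≤ 0 := by
        rw [hsum0]; linarith
      have hz := (Finset.sum_eq_zero_iff_of_nonneg hnn).mp
        (le_antisymm hle0 (Finset.sum_nonneg hnn))
      exact fun j => hz j (Finset.mem_univ j)
    refine ⟨Finset.univ.filter (fun j => ∑ i, c i * (A i j : ℝ) = w j),
      ⟨c, fun j hj => (Finset.mem_filter.mp hj).2, fun j hj =>
        lt_of_le_of_ne (hfeas j)
          (fun he => hj (Finset.mem_filter.mpr ⟨Finset.mem_univ j, he⟩))⟩,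
      η, hη, ?_⟩
    funext i
    rw [show x i = ∑ j, η j * (A i j : ℝ) from congrFun hxa i]
    refine (Finset.sum_subset (Finset.subset_univ _) (fun j _ hj => ?_)).symm
    rcases mul_eq_zero.mp (hslack j) with h | h
    · rw [h, zero_mul]
    · exact absurd (Finset.mem_filter.mpr ⟨Finset.mem_univ j,
        by linarith [sub_eq_zero.mp h]⟩) hj
  · rintro ⟨τ, hτ, lam, hlam, hx⟩
    refine ⟨fun j => if j ∈ τ then lam j else 0, fun j => ?_, ?_⟩
    · show (0:ℝ) ≤ if j ∈ τ then lam j else 0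
      split
      · exact hlam j
      · exact le_refl _
    · rw [hx]
      funext i
      rw [← Finset.sum_subset (Finset.subset_univ τ) (fun j _ hj => by
        show (if j ∈ τ then lam j else 0) * (A i j : ℝ) = 0
        rw [if_neg hj, zero_mul])]
      refine Finset.sum_congr rfl fun j hj => ?_
      show lam j * (A i j : ℝ) = (if j ∈ τ then lam j else 0) * (A i j : ℝ)
      rw [if_pos hj]
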